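/- If N is a normal subloop of a loop L, then the left multiplication group of the quotient loop L/N is isomorphic to Mlt_ℓ(L)/𝓛(N), where 𝓛(N) = { α ∈ Mlt_ℓ(L) : α(x) ∈ N·x for all x ∈ L }. -/

import Mathlib

/-- A loop: a binary operation with two-sided identity whose left and right
translations are bijections. -/
structure LoopStr (L : Type*) where
  mul : L → L → L
  one : L
  one_mul : ∀ x, mul one x = x
  mul_one : ∀ x, mul x one = x
  mul_left_bij : ∀ x, Function.Bijective (mul x)
  mul_right_bij : ∀ x, Function.Bijective fun y => mul y x

/-- Left translation `λ_x` as a permutation. -/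
noncomputable def LoopStr.lam {L : Type*} (S : LoopStr L) (x : L) : Equiv.Perm L :=
  Equiv.ofBijective _ (S.mul_left_bij x)

/-- Right translation `ρ_x` as a permutation. -/
noncomputable def LoopStr.rho {L : Type*} (S : LoopStr L) (x : L) : Equiv.Perm L :=
  Equiv.ofBijective _ (S.mul_right_bij x)

/-- The left multiplication group `Mlt_ℓ(L)`. -/
noncomputable def LoopStr.Mlt {L : Type*} (S : LoopStr L) : Subgroup (Equiv.Perm L) :=
  Subgroup.closure (Set.range S.lam)

/-- Left division: `ldiv a b` is the unique solution `x` of `a·x = b`. -/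
noncomputable def LoopStr.ldiv {L : Type*} (S : LoopStr L) (a b : L) : L := (S.lam a).symm b

/-- Right division: `rdiv a b` is the unique solution `x` of `x·b = a`. -/
noncomputable def LoopStr.rdiv {L : Type*} (S : LoopStr L) (a b : L) : L := (S.rho b).symm a

/-- The inner mapping `δ_{x,y} = λ_{xy}⁻¹ ∘ λ_x ∘ λ_y`. -/
noncomputable def LoopStr.delta {L : Type*} (S : LoopStr L) (x y : L) : Equiv.Perm L :=
  (S.lam (S.mul x y))⁻¹ * S.lam x * S.lam y

/-- A loop homomorphism: preserves the multiplication and the identity. -/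
def IsLoopHom {L L' : Type*} (S : LoopStr L) (S' : LoopStr L') (θ : L → L') : Prop :=
  θ S.one = S'.one ∧ ∀ x y, θ (S.mul x y) = S'.mul (θ x) (θ y)

/-- A subloop: a subset containing the identity, closed under multiplication
and both divisions. -/
def IsSubloop {L : Type*} (S : LoopStr L) (N : Set L) : Prop :=
  S.one ∈ N ∧ (∀ a ∈ N, ∀ b ∈ N, S.mul a b ∈ N) ∧
    (∀ a ∈ N, ∀ b ∈ N, S.ldiv a b ∈ N) ∧ (∀ a ∈ N, ∀ b ∈ N, S.rdiv a b ∈ N)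

/-- A normal subloop: `ab·N = a·(bN) = (aN)·b` for all `a, b`. -/
def IsNormalSubloop {L : Type*} (S : LoopStr L) (N : Set L) : Prop :=
  IsSubloop S N ∧ ∀ a b : L,
    ((fun n => S.mul (S.mul a b) n) '' N = (fun n => S.mul a (S.mul b n)) '' N) ∧
    ((fun n => S.mul (S.mul a b) n) '' N = (fun n => S.mul (S.mul a n) b) '' N)

/-- If `N` is a normal subloop of `L`, then
`Mlt_ℓ(L/N) ≅ Mlt_ℓ(L)/𝓛(N)`. The quotient loop `L/N` is realized as any
surjective loop homomorphism `θ : L → L'` with kernel `N`. -/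
theorem stmt3 {L L' : Type*} (S : LoopStr L) (S' : LoopStr L') (N : Set L)
    (hN : IsNormalSubloop S N) (θ : L → L') (hθ : IsLoopHom S S' θ)
    (hsurj : Function.Surjective θ) (hker : {x : L | θ x = S'.one} = N)
    (H : Subgroup ↥S.Mlt) [hHn : H.Normal]
    (hH : ∀ α : ↥S.Mlt, α ∈ H ↔ ∀ x : L, ∃ n ∈ N, (α : Equiv.Perm L) x = S.mul n x) :
    Nonempty ((↥S.Mlt ⧸ H) ≃* ↥S'.Mlt) := by
  classical
  have hlam : ∀ (a x : L), S.lam a x = S.mul a x := fun _ _ => rfl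
  have hlam' : ∀ (a x : L'), S'.lam a x = S'.mul a x := fun _ _ => rfl
  -- θ u = θ v iff u ∈ N·v
  have hcoset : ∀ u v : L, θ u = θ v ↔ ∃ n ∈ N, u = S.mul n v := by
    intro u v
    constructor
    · intro h
      have hmul : S.mul (S.rdiv u v) v = u := (S.rho v).apply_symm_apply u
      refine ⟨S.rdiv u v, ?_, hmul.symm⟩
      have h1 : S'.mul (θ (S.rdiv u v)) (θ v) = S'.mul S'.one (θ v) := by
        rw [← hθ.2, hmul, h, S'.one_mul]
      have h2 : θ (S.rdiv u v) = S'.one := (S'.mul_right_bij (θ v)).1 h1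
      rw [← hker]; exact h2
    · rintro ⟨n, hn, rfl⟩
      have : θ n = S'.one := by rw [← hker] at hn; exact hn
      rw [hθ.2, this, S'.one_mul]
  -- uniqueness of descent
  have huniq : ∀ β β' : Equiv.Perm L', (∀ x, β (θ x) = β' (θ x)) → β = β' := by
    intro β β' h
    ext y
    obtain ⟨x, rfl⟩ := hsurj y
    exact h x
  -- every α in Mlt descends
  have key : ∀ α ∈ S.Mlt, ∃ β : Equiv.Perm L', β ∈ S'.Mlt ∧ ∀ x, θ (α x) = β (θ x) := by
    intro α hα
    refine Subgroup.closure_induction ?_ ?_ ?_ ?_ hα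
    · rintro x ⟨a, rfl⟩
      exact ⟨S'.lam (θ a), Subgroup.subset_closure ⟨θ a, rfl⟩,
        fun x => by rw [hlam, hlam', hθ.2]⟩
    · exact ⟨1, one_mem _, fun x => rfl⟩
    · rintro x y hx hy ⟨β₁, hβ₁, h1⟩ ⟨β₂, hβ₂, h2⟩
      exact ⟨β₁ * β₂, mul_mem hβ₁ hβ₂, fun z => by
        simp only [Equiv.Perm.mul_apply, h2, h1]⟩
    · rintro x hx ⟨β, hβ, h1⟩
      refine ⟨β⁻¹, inv_mem hβ, fun z => ?_⟩
      apply β.injective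
      rw [← h1, Equiv.Perm.inv_def, Equiv.Perm.inv_def, Equiv.apply_symm_apply, Equiv.apply_symm_apply]
  -- define the homomorphism
  choose β hβmem hβspec using key
  have hφval : ∀ (α : Equiv.Perm L) (hα : α ∈ S.Mlt) (γ : Equiv.Perm L'),
      (∀ x, θ (α x) = γ (θ x)) → β α hα = γ := by
    intro α hα γ hγ
    exact huniq _ _ fun x => by rw [← hβspec α hα, hγ]
  let φ : ↥S.Mlt →* ↥S'.Mlt :=
    { toFun := fun α => ⟨β α.1 α.2, hβmem α.1 α.2⟩
      map_one' := by
        ext1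
        exact hφval 1 (one_mem _) 1 fun x => rfl
      map_mul' := fun α₁ α₂ => by
        ext1
        refine hφval _ _ (β α₁.1 α₁.2 * β α₂.1 α₂.2) fun x => ?_
        show θ ((α₁ : Equiv.Perm L) ((α₂ : Equiv.Perm L) x)) =
          (β α₁.1 α₁.2) ((β α₂.1 α₂.2) (θ x))
        rw [hβspec α₁.1 α₁.2, hβspec α₂.1 α₂.2] }
  -- surjectivity
  have hφsurj : Function.Surjective φ := by
    have hle : S'.Mlt ≤ ((S'.Mlt.subtype).comp φ).range := by
      refine (Subgroup.closure_le _).mpr ?_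
      rintro x ⟨a', rfl⟩
      obtain ⟨a, rfl⟩ := hsurj a'
      have hmem : S.lam a ∈ S.Mlt := Subgroup.subset_closure ⟨a, rfl⟩
      refine ⟨⟨S.lam a, hmem⟩, ?_⟩
      show β (S.lam a) hmem = S'.lam (θ a)
      exact hφval _ _ _ fun x => by rw [hlam, hlam', hθ.2]
    intro b
    obtain ⟨a, ha⟩ := hle b.2
    exact ⟨a, Subtype.ext ha⟩
  -- kernel
  have hkerφ : φ.ker = H := by
    ext α
    rw [MonoidHom.mem_ker, hH]
    constructor
    · intro h x
      have : β α.1 α.2 = 1 := congrArg Subtype.val h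
      have hx : θ ((α : Equiv.Perm L) x) = θ x := by
        rw [hβspec α.1 α.2, this]; rfl
      obtain ⟨n, hn, hnx⟩ := (hcoset _ _).1 hx
      exact ⟨n, hn, hnx⟩
    · intro h
      ext1
      refine hφval _ _ 1 fun x => ?_
      obtain ⟨n, hn, hnx⟩ := h x
      show θ ((α : Equiv.Perm L) x) = θ x
      exact (hcoset _ _).2 ⟨n, hn, hnx⟩
  exact ⟨(QuotientGroup.quotientMulEquivOfEq hkerφ.symm).trans
    (QuotientGroup.quotientKerEquivOfSurjective φ hφsurj)⟩
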